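/- Let $n \ge 3$ and let $Y_1, Y_2 \in \mathbb{R}$. Then the infimum over $\alpha \in [0,1]$ of $\alpha^{(n-2)/n} Y_1 + (1-\alpha)^{(n-2)/n} Y_2$ equals $-\left(|Y_1|^{n/2} + |Y_2|^{n/2}\right)^{2/n}$ if $Y_1 \le 0$ and $Y_2 \le 0$, and equals $\min\{Y_1, Y_2\}$ otherwise. -/

import Mathlib

open Real Set

lemma rpow_zero_case {n : ℕ} (hn : 3 ≤ n) {a b : ℝ} (ha : 0 ≤ a) (hb : 0 ≤ b)
    (hS : a ^ ((n : ℝ) / 2) + b ^ ((n : ℝ) / 2) = 0) : a = 0 ∧ b = 0 := by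
  have hn0 : (0:ℝ) < n := by positivity
  have h1 : (0:ℝ) ≤ a ^ ((n:ℝ)/2) := by positivity
  have h2 : (0:ℝ) ≤ b ^ ((n:ℝ)/2) := by positivity
  have hne : ((n:ℝ)/2) ≠ 0 := by positivity
  have h3 : a ^ ((n:ℝ)/2) = 0 := by linarith
  have h4 : b ^ ((n:ℝ)/2) = 0 := by linarith
  exact ⟨(Real.rpow_eq_zero ha hne).mp h3, (Real.rpow_eq_zero hb hne).mp h4⟩

lemma holder2_aux {n : ℕ} (hn : 3 ≤ n) {a b α : ℝ} (ha : 0 ≤ a) (hb : 0 ≤ b)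
    (hα0 : 0 ≤ α) (hα1 : α ≤ 1) :
    α ^ (((n : ℝ) - 2) / n) * a + (1 - α) ^ (((n : ℝ) - 2) / n) * b ≤
      (a ^ ((n : ℝ) / 2) + b ^ ((n : ℝ) / 2)) ^ (2 / (n : ℝ)) := by
  have hn0 : (0:ℝ) < n := by positivity
  set p : ℝ := ((n : ℝ) - 2) / n with hp
  set q : ℝ := 2 / (n : ℝ) with hq
  have hn3 : (3:ℝ) ≤ n := by exact_mod_cast hn
  have hp0 : 0 ≤ p := by apply div_nonneg _ hn0.le; linarith
  have hq0 : 0 < q := by positivity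
  have hpq : p + q = 1 := by rw [hp, hq]; field_simp; ring
  set S : ℝ := a ^ ((n : ℝ) / 2) + b ^ ((n : ℝ) / 2) with hS
  have hSn : 0 ≤ S := by positivity
  rcases eq_or_lt_of_le hSn with hS0 | hS0
  · obtain ⟨ha', hb'⟩ := rpow_zero_case hn ha hb hS0.symm
    rw [← hS0, ha', hb', Real.zero_rpow hq0.ne', mul_zero, mul_zero, add_zero]
  · have key : ∀ x y : ℝ, 0 ≤ x → 0 ≤ y →
        x ^ p * y ≤ (p * x + q * (y ^ ((n:ℝ)/2) / S)) * S ^ q := by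
      intro x y hx hy
      have hgm := Real.geom_mean_le_arith_mean2_weighted hp0 hq0.le hx
        (by positivity : (0:ℝ) ≤ y ^ ((n:ℝ)/2) / S) hpq
      have hrw : (y ^ ((n:ℝ)/2) / S) ^ q * S ^ q = y := by
        rw [Real.div_rpow (by positivity) hSn, div_mul_cancel₀ _ (by positivity),
          ← Real.rpow_mul hy, show (n:ℝ)/2 * q = 1 by rw [hq]; field_simp, Real.rpow_one]
      calc x ^ p * y = x ^ p * (y ^ ((n:ℝ)/2) / S) ^ q * S ^ q := by
            rw [mul_assoc, hrw]
        _ ≤ (p * x + q * (y ^ ((n:ℝ)/2) / S)) * S ^ q :=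
            mul_le_mul_of_nonneg_right hgm (by positivity)
    have h1 := key α a hα0 ha
    have h2 := key (1-α) b (by linarith) hb
    have hc : q * (a ^ ((n:ℝ)/2) / S) + q * (b ^ ((n:ℝ)/2) / S) = q := by
      field_simp
      rw [hS]
    have hsum : (p * α + q * (a ^ ((n:ℝ)/2) / S)) + (p * (1-α) + q * (b ^ ((n:ℝ)/2) / S)) = 1 := by
      have hpp : p * α + p * (1 - α) = p := by ring
      linarith
    nlinarith [Real.rpow_nonneg hSn q]

lemma holder2_eq {n : ℕ} (hn : 3 ≤ n) {a b : ℝ} (ha : 0 ≤ a) (hb : 0 ≤ b) :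
    ∃ α ∈ Set.Icc (0:ℝ) 1,
      α ^ (((n : ℝ) - 2) / n) * a + (1 - α) ^ (((n : ℝ) - 2) / n) * b =
        (a ^ ((n : ℝ) / 2) + b ^ ((n : ℝ) / 2)) ^ (2 / (n : ℝ)) := by
  have hn0 : (0:ℝ) < n := by positivity
  set p : ℝ := ((n : ℝ) - 2) / n with hp
  have hn3 : (3:ℝ) ≤ n := by exact_mod_cast hn
  have hp0 : 0 < p := by apply div_pos _ hn0; linarith
  set S : ℝ := a ^ ((n : ℝ) / 2) + b ^ ((n : ℝ) / 2) with hS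
  have h1 : (0:ℝ) ≤ a ^ ((n:ℝ)/2) := by positivity
  have h2 : (0:ℝ) ≤ b ^ ((n:ℝ)/2) := by positivity
  have hSn : 0 ≤ S := by positivity
  rcases eq_or_lt_of_le hSn with hS0 | hS0
  · obtain ⟨ha', hb'⟩ := rpow_zero_case hn ha hb hS0.symm
    refine ⟨0, by norm_num, ?_⟩
    rw [← hS0, ha', hb', Real.zero_rpow (by positivity : 2/(n:ℝ) ≠ 0)]
    simp
  · refine ⟨a ^ ((n:ℝ)/2) / S, ⟨by positivity, by rw [div_le_one hS0]; linarith⟩, ?_⟩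
    have h1α : 1 - a ^ ((n:ℝ)/2) / S = b ^ ((n:ℝ)/2) / S := by
      field_simp
      rw [hS]; ring
    rw [h1α]
    have term : ∀ y : ℝ, 0 ≤ y → (y ^ ((n:ℝ)/2) / S) ^ p * y = y ^ ((n:ℝ)/2) / S ^ p := by
      intro y hy
      rcases eq_or_lt_of_le hy with hy0 | hy0
      · rw [← hy0, Real.zero_rpow (by positivity : (n:ℝ)/2 ≠ 0), zero_div,
          Real.zero_rpow hp0.ne', zero_mul, zero_div]
      · rw [Real.div_rpow (by positivity) hSn, div_mul_eq_mul_div,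
          ← Real.rpow_mul hy0.le, ← Real.rpow_add_one hy0.ne',
          show (n:ℝ)/2 * p + 1 = (n:ℝ)/2 by rw [hp]; field_simp; ring]
    rw [term a ha, term b hb, ← add_div,
      div_eq_iff (Real.rpow_pos_of_pos hS0 p).ne', ← Real.rpow_add hS0,
      show 2 / (n:ℝ) + p = 1 by rw [hp]; field_simp; ring, Real.rpow_one]

lemma le_rpow_self_of_le_one {p x : ℝ} (hp0 : 0 < p) (hp1 : p ≤ 1)
    (hx0 : 0 ≤ x) (hx1 : x ≤ 1) : x ≤ x ^ p := by
  rcases eq_or_lt_of_le hx0 with h | h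
  · rw [← h, Real.zero_rpow hp0.ne']
  · calc x = x ^ (1:ℝ) := (Real.rpow_one x).symm
      _ ≤ x ^ p := Real.rpow_le_rpow_of_exponent_ge h hx1 hp1

/-- infimum over `α ∈ [0,1]` of
`α^((n-2)/n) Y₁ + (1-α)^((n-2)/n) Y₂`. -/
theorem stmt0 (n : ℕ) (hn : 3 ≤ n) (Y₁ Y₂ : ℝ) :
    sInf ((fun α : ℝ => α ^ (((n : ℝ) - 2) / n) * Y₁ +
        (1 - α) ^ (((n : ℝ) - 2) / n) * Y₂) '' Set.Icc (0:ℝ) 1) =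
      if Y₁ ≤ 0 ∧ Y₂ ≤ 0 then
        -((|Y₁| ^ ((n : ℝ) / 2) + |Y₂| ^ ((n : ℝ) / 2)) ^ (2 / (n : ℝ)))
      else min Y₁ Y₂ := by
  have hn0 : (0:ℝ) < n := by positivity
  have hn3 : (3:ℝ) ≤ n := by exact_mod_cast hn
  set p : ℝ := ((n : ℝ) - 2) / n with hp
  have hp0 : 0 < p := by apply div_pos _ hn0; linarith
  have hp1 : p ≤ 1 := by rw [hp, div_le_one hn0]; linarith
  set f : ℝ → ℝ := fun α : ℝ => α ^ p * Y₁ + (1 - α) ^ p * Y₂ with hf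
  have hf0 : f 0 = Y₂ := by
    simp [hf, Real.zero_rpow hp0.ne', Real.one_rpow]
  have hf1 : f 1 = Y₁ := by
    simp [hf, Real.zero_rpow hp0.ne', Real.one_rpow]
  split_ifs with h
  · obtain ⟨hY₁, hY₂⟩ := h
    have habs1 : |Y₁| = -Y₁ := abs_of_nonpos hY₁
    have habs2 : |Y₂| = -Y₂ := abs_of_nonpos hY₂
    rw [habs1, habs2]
    set m : ℝ := -(((-Y₁) ^ ((n:ℝ)/2) + (-Y₂) ^ ((n:ℝ)/2)) ^ (2/(n:ℝ))) with hm
    have lb : ∀ z ∈ f '' Set.Icc (0:ℝ) 1, m ≤ z := by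
      rintro z ⟨α, ⟨hα0, hα1⟩, rfl⟩
      have := holder2_aux hn (by linarith : (0:ℝ) ≤ -Y₁) (by linarith : (0:ℝ) ≤ -Y₂) hα0 hα1
      simp only [hf, hm]
      nlinarith [this]
    have mem : m ∈ f '' Set.Icc (0:ℝ) 1 := by
      obtain ⟨α, hα, hαeq⟩ := holder2_eq hn (by linarith : (0:ℝ) ≤ -Y₁)
        (by linarith : (0:ℝ) ≤ -Y₂)
      refine ⟨α, hα, ?_⟩
      simp only [hf, hm]
      nlinarith [hαeq]
    exact le_antisymm (csInf_le ⟨m, lb⟩ mem) (le_csInf ⟨m, mem⟩ lb)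
  · have lb : ∀ z ∈ f '' Set.Icc (0:ℝ) 1, min Y₁ Y₂ ≤ z := by
      rintro z ⟨α, ⟨hα0, hα1⟩, rfl⟩
      have hs1 : α ^ p ≤ 1 := Real.rpow_le_one hα0 hα1 hp0.le
      have hs0 : 0 ≤ α ^ p := Real.rpow_nonneg hα0 p
      have ht1 : (1-α) ^ p ≤ 1 := Real.rpow_le_one (by linarith) (by linarith) hp0.le
      have ht0 : 0 ≤ (1-α) ^ p := Real.rpow_nonneg (by linarith) p
      have hsα : α ≤ α ^ p := le_rpow_self_of_le_one hp0 hp1 hα0 hα1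
      have htα : 1 - α ≤ (1-α) ^ p := le_rpow_self_of_le_one hp0 hp1 (by linarith) (by linarith)
      simp only [hf]
      rcases le_or_gt Y₁ 0 with h1 | h1
      · have h2 : 0 < Y₂ := by
          by_contra h2; exact h ⟨h1, by linarith⟩
        have : min Y₁ Y₂ = Y₁ := min_eq_left (by linarith)
        rw [this]
        nlinarith
      · rcases le_or_gt Y₂ 0 with h2 | h2
        · have : min Y₁ Y₂ = Y₂ := min_eq_right (by linarith)
          rw [this]
          nlinarith
        · have hm1 : min Y₁ Y₂ ≤ Y₁ := min_le_left _ _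
          have hm2 : min Y₁ Y₂ ≤ Y₂ := min_le_right _ _
          have hmin0 : 0 ≤ min Y₁ Y₂ := le_min h1.le h2.le
          nlinarith [mul_le_mul_of_nonneg_right hsα h1.le,
            mul_le_mul_of_nonneg_right htα h2.le]
    have mem : min Y₁ Y₂ ∈ f '' Set.Icc (0:ℝ) 1 := by
      rcases min_cases Y₁ Y₂ with ⟨he, _⟩ | ⟨he, _⟩
      · exact ⟨1, by norm_num, by rw [hf1, he]⟩
      · exact ⟨0, by norm_num, by rw [hf0, he]⟩
    exact le_antisymm (csInf_le ⟨_, lb⟩ mem) (le_csInf ⟨_, mem⟩ lb)
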